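/- Let $b_1,\ldots,b_m$ be real numbers with $\sum_{i=1}^m b_i = 0$. Equality $\sum_{i=1}^m b_i^3 = \frac{m-2}{\sqrt{m(m-1)}}\left(\sum_{i=1}^m b_i^2\right)^{3/2}$ holds if and only if $m-1$ of the $b_i$'s are nonpositive and equal to each other. -/

import Mathlib

set_option maxHeartbeats 1000000


/-- Okumura Lemma (equality case of the right-hand inequality):
equality holds iff `m - 1` of the `b i`'s are nonpositive and equal. -/
theorem okumura_equality (m : ℕ) (hm : 2 ≤ m) (b : Fin m → ℝ)
    (hsum : ∑ i, b i = 0) :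
    (∑ i, (b i) ^ 3 =
        ((m : ℝ) - 2) / Real.sqrt (m * (m - 1)) * (∑ i, (b i) ^ 2) ^ ((3 : ℝ) / 2)) ↔
      ∃ (c : ℝ) (s : Finset (Fin m)), c ≤ 0 ∧ s.card = m - 1 ∧ ∀ i ∈ s, b i = c := by
  have hm2 : (2:ℝ) ≤ (m:ℝ) := by exact_mod_cast hm
  set B := ∑ i, b i ^ 2 with hBdef
  have hB0 : 0 ≤ B := Finset.sum_nonneg fun i _ => sq_nonneg _
  set M : ℝ := (m:ℝ) * ((m:ℝ) - 1) with hMdef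
  have hM : 0 < M := by nlinarith
  have hsM : Real.sqrt M ^ 2 = M := Real.sq_sqrt hM.le
  have hsMpos : 0 < Real.sqrt M := Real.sqrt_pos.mpr hM
  set u : ℝ := Real.sqrt B / Real.sqrt M with hudef
  have hu : 0 ≤ u := div_nonneg (Real.sqrt_nonneg _) (Real.sqrt_nonneg _)
  have hsqrtB : Real.sqrt B = Real.sqrt M * u := by
    rw [hudef, mul_div_assoc', mul_div_cancel_left₀ _ hsMpos.ne']
  have hBu : B = M * u ^ 2 := by
    have := Real.sq_sqrt hB0
    rw [hsqrtB] at this; nlinarith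
  have hRHS : ((m:ℝ) - 2) / Real.sqrt M * B ^ ((3:ℝ)/2) = ((m:ℝ) - 2) * M * u ^ 3 := by
    have h1 : B ^ ((3:ℝ)/2) = Real.sqrt B ^ 3 := by
      rw [Real.sqrt_eq_rpow, ← Real.rpow_natCast (B ^ ((1:ℝ)/2)) 3, ← Real.rpow_mul hB0]
      norm_num
    rw [h1, hsqrtB]
    rw [div_mul_eq_mul_div, div_eq_iff hsMpos.ne']
    linear_combination ((m:ℝ) - 2) * u ^ 3 * Real.sqrt M * hsM
  have key : ∑ i, (b i + u) ^ 2 * (b i - ((m:ℝ) - 1) * u)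
      = ∑ i, b i ^ 3 - ((m:ℝ) - 2) * M * u ^ 3 := by
    have e1 : ∑ i, (b i + u) ^ 2 * (b i - ((m:ℝ) - 1) * u)
        = ∑ i, (b i ^ 3 + ((3 - (m:ℝ)) * u) * b i ^ 2 + ((3 - 2*(m:ℝ)) * u^2) * b i
            + (-(((m:ℝ) - 1) * u^3))) := by
      apply Finset.sum_congr rfl; intro i _; ring
    rw [e1, Finset.sum_add_distrib, Finset.sum_add_distrib, Finset.sum_add_distrib,
      ← Finset.mul_sum, ← Finset.mul_sum, Finset.sum_const, Finset.card_univ,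
      Fintype.card_fin, nsmul_eq_mul, hsum, ← hBdef, hBu]
    ring
  constructor
  · intro heq
    by_cases hBz : B = 0
    · -- all b i = 0
      have hb0 : ∀ i ∈ Finset.univ, b i ^ 2 = 0 := by
        rw [← Finset.sum_eq_zero_iff_of_nonneg (fun i _ => sq_nonneg (b i))]
        exact hBz
      have hb0' : ∀ i, b i = 0 := fun i => by
        have := hb0 i (Finset.mem_univ i); exact pow_eq_zero_iff (by norm_num) |>.mp this
      refine ⟨0, Finset.univ.erase ⟨0, by omega⟩, le_refl 0, ?_, fun i _ => hb0' i⟩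
      rw [Finset.card_erase_of_mem (Finset.mem_univ _), Finset.card_univ, Fintype.card_fin]
    · have hBpos : 0 < B := lt_of_le_of_ne hB0 (Ne.symm hBz)
      have hupos : 0 < u := div_pos (Real.sqrt_pos.mpr hBpos) hsMpos
      -- bound: each b i ≤ (m-1) u
      have hle : ∀ i, b i ≤ ((m:ℝ) - 1) * u := by
        intro i
        have hcs : (∑ j ∈ Finset.univ.erase i, b j) ^ 2
            ≤ ((Finset.univ.erase i).card : ℝ) * ∑ j ∈ Finset.univ.erase i, b j ^ 2 :=
          sq_sum_le_card_mul_sum_sq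
        have hs1 : ∑ j ∈ Finset.univ.erase i, b j = -(b i) := by
          have := Finset.add_sum_erase Finset.univ b (Finset.mem_univ i)
          rw [hsum] at this; linarith
        have hs2 : ∑ j ∈ Finset.univ.erase i, b j ^ 2 = B - b i ^ 2 := by
          have := Finset.add_sum_erase Finset.univ (fun j => b j ^ 2) (Finset.mem_univ i)
          rw [← hBdef] at this; linarith
        have hcard : ((Finset.univ.erase i).card : ℝ) = (m:ℝ) - 1 := by
          rw [Finset.card_erase_of_mem (Finset.mem_univ _), Finset.card_univ, Fintype.card_fin]
          push_cast [Nat.cast_sub (by omega : 1 ≤ m)]; ring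
        rw [hs1, hs2, hcard] at hcs
        -- b i ^ 2 ≤ (m-1)(B - b i^2) ⇒ b i ^ 2 ≤ ((m-1)u)^2
        have hb2 : b i ^ 2 ≤ (((m:ℝ) - 1) * u) ^ 2 := by nlinarith [hBu]
        nlinarith [sq_nonneg (b i + ((m:ℝ)-1)*u), mul_nonneg (sub_nonneg.mpr hm2) hupos.le]
      have hterm : ∀ i ∈ Finset.univ, (b i + u) ^ 2 * (b i - ((m:ℝ) - 1) * u) ≤ 0 := by
        intro i _
        exact mul_nonpos_of_nonneg_of_nonpos (sq_nonneg _) (by linarith [hle i])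
      have hsum0 : ∑ i, (b i + u) ^ 2 * (b i - ((m:ℝ) - 1) * u) = 0 := by
        rw [key, heq, hRHS]; ring
      have hall := (Finset.sum_eq_zero_iff_of_nonpos hterm).mp hsum0
      have hval : ∀ i, b i = -u ∨ b i = ((m:ℝ) - 1) * u := by
        intro i
        have := hall i (Finset.mem_univ i)
        rcases mul_eq_zero.mp this with h | h
        · left; have := pow_eq_zero_iff (n := 2) (by norm_num) |>.mp h; linarith
        · right; linarith
      classical
      set s : Finset (Fin m) := Finset.univ.filter (fun i => b i = -u) with hsdef
      have hcompl : ∀ i ∈ sᶜ, b i = ((m:ℝ) - 1) * u := by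
        intro i hi
        rcases hval i with h | h
        · exfalso; rw [Finset.mem_compl, hsdef, Finset.mem_filter] at hi
          exact hi ⟨Finset.mem_univ i, h⟩
        · exact h
      have hsumsplit : (s.card : ℝ) * (-u) + ((sᶜ).card : ℝ) * (((m:ℝ) - 1) * u) = 0 := by
        have h1 : ∑ i ∈ s, b i = (s.card : ℝ) * (-u) := by
          rw [Finset.sum_congr rfl (fun i hi => (Finset.mem_filter.mp hi).2),
            Finset.sum_const, nsmul_eq_mul]
        have h2 : ∑ i ∈ sᶜ, b i = ((sᶜ).card : ℝ) * (((m:ℝ) - 1) * u) := by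
          rw [Finset.sum_congr rfl hcompl, Finset.sum_const, nsmul_eq_mul]
        have := Finset.sum_add_sum_compl s b
        rw [h1, h2, hsum] at this; linarith
      have hcards : s.card + (sᶜ).card = m := by
        rw [Finset.card_add_card_compl, Fintype.card_fin]
      have hscard : (s.card : ℝ) = (m:ℝ) - ((sᶜ).card : ℝ) := by
        have : ((s.card + (sᶜ).card : ℕ) : ℝ) = (m : ℝ) := by rw [hcards]
        push_cast at this; linarith
      have hmu : (0:ℝ) < (m:ℝ) * u := mul_pos (by linarith) hupos
      have hz : (((sᶜ).card:ℝ) - 1) * ((m:ℝ) * u) = 0 := by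
        rw [hscard] at hsumsplit; linear_combination hsumsplit
      have hk : (sᶜ).card = 1 := by
        rcases mul_eq_zero.mp hz with h | h
        · exact_mod_cast (by linarith : ((sᶜ).card:ℝ) = 1)
        · exact absurd h hmu.ne'
      refine ⟨-u, s, by linarith, by omega, fun i hi => (Finset.mem_filter.mp hi).2⟩
  · rintro ⟨c, s, hc, hcard, hbc⟩
    have hcardc : (sᶜ).card = 1 := by
      rw [Finset.card_compl, Fintype.card_fin, hcard]; omega
    obtain ⟨j, hj⟩ := Finset.card_eq_one.mp hcardc
    have hcardR : (s.card : ℝ) = (m:ℝ) - 1 := by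
      rw [hcard]; push_cast [Nat.cast_sub (by omega : 1 ≤ m)]; ring
    have hsums : ∑ i ∈ s, b i = ((m:ℝ) - 1) * c := by
      rw [Finset.sum_congr rfl hbc, Finset.sum_const, nsmul_eq_mul, hcardR]
    have hbj : b j = ((m:ℝ) - 1) * (-c) := by
      have := Finset.sum_add_sum_compl s b
      rw [hsums, hj, Finset.sum_singleton, hsum] at this; linarith
    have hBc : B = M * c ^ 2 := by
      have h2 : ∑ i ∈ s, b i ^ 2 = ((m:ℝ) - 1) * c ^ 2 := by
        rw [Finset.sum_congr rfl (fun i hi => by rw [hbc i hi]),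
          Finset.sum_const, nsmul_eq_mul, hcardR]
      have := Finset.sum_add_sum_compl s (fun i => b i ^ 2)
      rw [h2, hj, Finset.sum_singleton, hbj, ← hBdef] at this
      rw [← this, hMdef]; ring
    have huc : u = -c := by
      rw [hudef, hBc]
      have : Real.sqrt (M * c ^ 2) = Real.sqrt M * (-c) := by
        rw [Real.sqrt_mul hM.le, Real.sqrt_sq_eq_abs, abs_of_nonpos hc]
      rw [this]; field_simp
    have hzero : ∑ i, (b i + u) ^ 2 * (b i - ((m:ℝ) - 1) * u) = 0 := by
      apply Finset.sum_eq_zero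
      intro i _
      by_cases his : i ∈ s
      · rw [hbc i his, huc]; ring
      · have : i ∈ sᶜ := Finset.mem_compl.mpr his
        rw [hj, Finset.mem_singleton] at this
        rw [this, hbj, huc]; ring
    rw [hzero] at key
    rw [show ∑ i, b i ^ 3 = ((m:ℝ) - 2) * M * u ^ 3 by linarith, hRHS.symm]
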